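/- For all real $\ell > 0$ and all real $u \geq 0$, it holds that $1 + e^{-\ell} \cdot \frac{\frac{u}{\ell} e^{\ell} - u - \frac{u}{\ell} + \ell}{1 + u} \leq 1 + e^{-1}$. -/

import Mathlib

open Real

lemma exp_tsum (x : ℝ) : Real.exp x = ∑' n : ℕ, x ^ n / (Nat.factorial n : ℝ) := by
  rw [Real.exp_eq_exp_ℝ, NormedSpace.exp_eq_tsum_div]

lemma tail3 (x : ℝ) :
    Real.exp x - (1 + x + x ^ 2 / 2) = ∑' k : ℕ, x ^ (k + 3) / (Nat.factorial (k + 3) : ℝ) := by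
  have h := Summable.sum_add_tsum_nat_add (f := fun n : ℕ => x ^ n / (Nat.factorial n : ℝ)) 3
    (Real.summable_pow_div_factorial x)
  rw [exp_tsum, ← h]
  norm_num [Finset.sum_range_succ, Nat.factorial]
  try ring

lemma tail4 (x : ℝ) :
    Real.exp x - (1 + x + x ^ 2 / 2 + x ^ 3 / 6) = ∑' k : ℕ, x ^ (k + 4) / (Nat.factorial (k + 4) : ℝ) := by
  have h := Summable.sum_add_tsum_nat_add (f := fun n : ℕ => x ^ n / (Nat.factorial n : ℝ)) 4
    (Real.summable_pow_div_factorial x)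
  rw [exp_tsum, ← h]
  norm_num [Finset.sum_range_succ, Nat.factorial]
  try ring

lemma seriesB {ℓ : ℝ} (hℓ : 0 ≤ ℓ) :
    Real.exp ℓ - (1 + ℓ + ℓ ^ 2 / 2 + ℓ ^ 3 / 6)
      ≤ Real.exp (-1) * ℓ * (Real.exp ℓ - (1 + ℓ + ℓ ^ 2 / 2)) := by
  rw [tail3, tail4, ← tsum_mul_left]
  have hsum3 : Summable (fun k : ℕ => ℓ ^ (k + 3) / (Nat.factorial (k + 3) : ℝ)) := by
    have := (Real.summable_pow_div_factorial ℓ).comp_injective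
      (add_left_injective 3)
    simpa [Function.comp_def] using this
  refine Summable.tsum_le_tsum (fun k => ?_) ?_ (hsum3.mul_left _)
  · have hF3 : (0:ℝ) < (Nat.factorial (k + 3) : ℝ) := by
      exact_mod_cast Nat.factorial_pos _
    have hfact : ((Nat.factorial (k + 4) : ℝ)) = ((k:ℝ) + 4) * (Nat.factorial (k + 3) : ℝ) := by
      rw [show k + 4 = (k + 3) + 1 from rfl, Nat.factorial_succ]
      push_cast; ring
    have hk4 : (0:ℝ) < (k:ℝ) + 4 := by positivity
    have key : Real.exp (-1) * ℓ * (ℓ ^ (k + 3) / (Nat.factorial (k + 3) : ℝ))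
        = (Real.exp (-1) * ((k:ℝ) + 4)) * (ℓ ^ (k + 4) / (((k:ℝ) + 4) * (Nat.factorial (k + 3) : ℝ))) := by
      field_simp
      ring
    rw [hfact, key]
    have hE3 : (1:ℝ)/3 ≤ Real.exp (-1) := by
      rw [Real.exp_neg]
      have h3 : Real.exp 1 ≤ 3 := by nlinarith [Real.exp_one_lt_d9]
      have := inv_anti₀ (Real.exp_pos 1) h3
      linarith [this]
    have h2 : (1:ℝ) ≤ Real.exp (-1) * ((k:ℝ) + 4) := by
      nlinarith [mul_nonneg (by linarith : (0:ℝ) ≤ Real.exp (-1) - 1/3) (le_of_lt hk4)]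
    have hq : (0:ℝ) ≤ ℓ ^ (k + 4) / (((k:ℝ) + 4) * (Nat.factorial (k + 3) : ℝ)) := by positivity
    nlinarith [h2, hq]
  · have := (Real.summable_pow_div_factorial ℓ).comp_injective
      (add_left_injective 4)
    simpa [Function.comp_def] using this

lemma quadQ {ℓ : ℝ} (hℓ : 0 ≤ ℓ) :
    ℓ ^ 2 / 2 + ℓ ^ 3 / 6 ≤ Real.exp (-1) * ℓ * (1 + ℓ + ℓ ^ 2 / 2) := by
  have he1 : Real.exp 1 < 2.7182818286 := Real.exp_one_lt_d9
  have he2 : 2.7182818283 < Real.exp 1 := Real.exp_one_gt_d9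
  have hinv : Real.exp (-1) = (Real.exp 1)⁻¹ := by rw [Real.exp_neg]
  have hpos : (0:ℝ) < Real.exp 1 := Real.exp_pos 1
  rw [hinv]
  rw [inv_mul_eq_div, div_mul_eq_mul_div, le_div_iff₀ hpos]
  nlinarith [sq_nonneg (ℓ - 19/5), sq_nonneg ℓ, mul_nonneg hℓ (sq_nonneg ℓ), mul_nonneg (mul_nonneg hℓ hℓ) (sq_nonneg (ℓ - 19/5))]

lemma keyB {ℓ : ℝ} (hℓ : 0 ≤ ℓ) :
    Real.exp ℓ - 1 - ℓ ≤ Real.exp (-1) * ℓ * Real.exp ℓ := by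
  have h1 := seriesB hℓ
  have h2 := quadQ hℓ
  nlinarith

lemma keyA {ℓ : ℝ} (hℓ : 0 ≤ ℓ) : ℓ ^ 2 ≤ Real.exp (-1) * ℓ * Real.exp ℓ := by
  have h : ℓ ≤ Real.exp (ℓ - 1) := by
    nlinarith [Real.add_one_le_exp (ℓ - 1)]
  have : Real.exp (ℓ - 1) = Real.exp (-1) * Real.exp ℓ := by
    rw [← Real.exp_add]; ring_nf
  nlinarith [Real.exp_pos (ℓ - 1)]

theorem stmt_15 (ℓ u : ℝ) (hℓ : 0 < ℓ) (hu : 0 ≤ u) :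
    1 + Real.exp (-ℓ) * ((u / ℓ) * Real.exp ℓ - u - u / ℓ + ℓ) / (1 + u)
      ≤ 1 + Real.exp (-1) := by
  have hE : (0:ℝ) < Real.exp ℓ := Real.exp_pos ℓ
  have hnegE : Real.exp (-ℓ) = (Real.exp ℓ)⁻¹ := Real.exp_neg ℓ
  have hd : (0:ℝ) < 1 + u := by linarith
  have hA := keyA hℓ.le
  have hB := keyB hℓ.le
  have hBu : u * (Real.exp ℓ - 1 - ℓ) ≤ u * (Real.exp (-1) * ℓ * Real.exp ℓ) :=
    mul_le_mul_of_nonneg_left hB hu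
  -- reduce to numerator inequality
  have key : (u / ℓ * Real.exp ℓ - u - u / ℓ + ℓ) * ℓ
      ≤ Real.exp (-1) * ℓ * Real.exp ℓ * (1 + u) := by
    have : (u / ℓ * Real.exp ℓ - u - u / ℓ + ℓ) * ℓ
        = u * (Real.exp ℓ - 1 - ℓ) + ℓ ^ 2 := by
      field_simp
      ring
    rw [this]
    nlinarith
  have step : Real.exp (-ℓ) * ((u / ℓ) * Real.exp ℓ - u - u / ℓ + ℓ) / (1 + u)
      ≤ Real.exp (-1) := by
    rw [div_le_iff₀ hd, hnegE, inv_mul_eq_div, div_le_iff₀ hE]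
    calc (u / ℓ * Real.exp ℓ - u - u / ℓ + ℓ)
        = ((u / ℓ * Real.exp ℓ - u - u / ℓ + ℓ) * ℓ) / ℓ := by field_simp
      _ ≤ (Real.exp (-1) * ℓ * Real.exp ℓ * (1 + u)) / ℓ := by
          gcongr
      _ = Real.exp (-1) * (1 + u) * Real.exp ℓ := by field_simp
  linarith
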